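/- Let 0 < ρ⋆ < 1, let F : ℝ → ℝ be continuous on [0,1] with F(0) = F(1) = 0, strictly increasing on [0,ρ⋆] and strictly decreasing on [ρ⋆,1], let 0 < C < F(ρ⋆) and H > 0, and let ρ₁ ∈ (0,ρ⋆), ρ₂ ∈ (ρ⋆,1) be the unique points with F(ρ₁) = C = F(ρ₂). Suppose ρ : [0,∞) → ℝ is differentiable with ρ′(x) = −(1−ρ(x))(F(ρ(x))−C)/(HC) for all x ≥ 0. If ρ(0) ∈ (0, ρ₂) then ρ(x) → ρ₁ as x → ∞; if ρ(0) ∈ (ρ₂, 1) then ρ(x) → 1 as x → ∞. That is, for the right boundary layer ρ₁ is stable with domain of attraction containing (0, ρ₂) and 1 is stable with domain of attraction containing (ρ₂, 1). -/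

import Mathlib

/-- If the derivative of `f` is nonnegative whenever `f x ∈ [c, c+δ)`,
and `f s > c`, then `f x > c` for all `x ≥ s`. -/
lemma barrier_low (f d : ℝ → ℝ) (s c δ : ℝ) (hδ : 0 < δ)
    (hf : ∀ x, s ≤ x → HasDerivAt f (d x) x)
    (hd : ∀ x, s ≤ x → c ≤ f x → f x < c + δ → 0 ≤ d x)
    (h0 : c < f s) : ∀ x, s ≤ x → c < f x := by
  intro x2 hx2
  by_contra hcon
  push_neg at hcon
  have hcontAt : ∀ x, s ≤ x → ContinuousAt f x := fun x hx => (hf x hx).continuousAt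
  have hcontOn : ContinuousOn f (Set.Icc s x2) :=
    fun x hx => (hcontAt x hx.1).continuousWithinAt
  have hA_closed : IsClosed (Set.Icc s x2 ∩ f ⁻¹' Set.Iic c) :=
    hcontOn.preimage_isClosed_of_isClosed isClosed_Icc isClosed_Iic
  have hx2A : x2 ∈ Set.Icc s x2 ∩ f ⁻¹' Set.Iic c := ⟨⟨hx2, le_refl _⟩, hcon⟩
  have hA_ne : (Set.Icc s x2 ∩ f ⁻¹' Set.Iic c).Nonempty := ⟨x2, hx2A⟩
  have hA_bdd : BddBelow (Set.Icc s x2 ∩ f ⁻¹' Set.Iic c) := ⟨s, fun y hy => hy.1.1⟩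
  set t := sInf (Set.Icc s x2 ∩ f ⁻¹' Set.Iic c) with ht
  have htA : t ∈ Set.Icc s x2 ∩ f ⁻¹' Set.Iic c := hA_closed.csInf_mem hA_ne hA_bdd
  have hft : f t ≤ c := htA.2
  have hts : s < t := by
    rcases lt_or_eq_of_le htA.1.1 with h | h
    · exact h
    · exfalso; rw [← h] at hft; linarith
  have hnotA : ∀ x, s ≤ x → x < t → c < f x := by
    intro x hx hxt
    by_contra hc; push_neg at hc
    have hxA : x ∈ Set.Icc s x2 ∩ f ⁻¹' Set.Iic c :=
      ⟨⟨hx, le_trans hxt.le htA.1.2⟩, hc⟩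
    exact absurd (csInf_le hA_bdd hxA) (not_le.mpr hxt)
  have hε : (0:ℝ) < c + δ - f t := by linarith
  obtain ⟨δ0, hδ0, hball⟩ := Metric.continuousAt_iff.mp (hcontAt t hts.le) _ hε
  set δ' := min (δ0 / 2) ((t - s) / 2) with hδ'
  have hδ'pos : 0 < δ' := lt_min (by linarith) (by linarith)
  have hδ'1 : δ' ≤ δ0 / 2 := min_le_left _ _
  have hδ'2 : δ' ≤ (t - s) / 2 := min_le_right _ _
  have hlt : ∀ x ∈ Set.Icc (t - δ') t, f x < c + δ := by
    intro x hx
    have hb : dist x t < δ0 := by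
      rw [Real.dist_eq, abs_lt]
      constructor
      · linarith [hx.1]
      · linarith [hx.2]
    have := hball hb
    rw [Real.dist_eq, abs_lt] at this
    linarith [this.1]
  have hmono : MonotoneOn f (Set.Icc (t - δ') t) := by
    apply monotoneOn_of_deriv_nonneg (convex_Icc _ _)
    · intro x hx
      exact (hcontAt x (by linarith [hx.1])).continuousWithinAt
    · intro x hx
      rw [interior_Icc] at hx
      exact ((hf x (by linarith [hx.1])).differentiableAt).differentiableWithinAt
    · intro x hx
      rw [interior_Icc] at hx
      have hsx : s ≤ x := by linarith [hx.1]
      rw [(hf x hsx).deriv]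
      exact hd x hsx (hnotA x hsx hx.2).le (hlt x ⟨hx.1.le, hx.2.le⟩)
  have h1 : f (t - δ') ≤ f t :=
    hmono ⟨le_refl _, by linarith⟩ ⟨by linarith, le_refl _⟩ (by linarith)
  have h2 : c < f (t - δ') := hnotA _ (by linarith) (by linarith)
  linarith

lemma barrier_up (f d : ℝ → ℝ) (s c δ : ℝ) (hδ : 0 < δ)
    (hf : ∀ x, s ≤ x → HasDerivAt f (d x) x)
    (hd : ∀ x, s ≤ x → c - δ < f x → f x ≤ c → d x ≤ 0)
    (h0 : f s < c) : ∀ x, s ≤ x → f x < c := by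
  intro x hx
  have := barrier_low (fun y => -f y) (fun y => -d y) s (-c) δ hδ
    (fun y hy => (hf y hy).neg)
    (fun y hy h1 h2 => by
      have := hd y hy (by linarith) (by linarith); linarith)
    (by linarith) x hx
  linarith

lemma escape_low (f d : ℝ → ℝ) (s m : ℝ)
    (hf : ∀ x, s ≤ x → HasDerivAt f (d x) x)
    (hm : ∀ x, s ≤ x → m ≤ d x) :
    ∀ x, s ≤ x → f s + m * (x - s) ≤ f x := by
  intro x hx
  have hg : ∀ y, s ≤ y → HasDerivAt (fun z => f z - m * z) (d y - m) y := by
    intro y hy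
    have := (hf y hy).sub ((hasDerivAt_id y).const_mul m)
    rw [mul_one] at this
    exact this
  have hmono : MonotoneOn (fun z => f z - m * z) (Set.Icc s x) := by
    apply monotoneOn_of_deriv_nonneg (convex_Icc _ _)
    · intro y hy; exact (hg y hy.1).continuousAt.continuousWithinAt
    · intro y hy
      rw [interior_Icc] at hy
      exact (hg y hy.1.le).differentiableAt.differentiableWithinAt
    · intro y hy
      rw [interior_Icc] at hy
      rw [(hg y hy.1.le).deriv]
      linarith [hm y hy.1.le]
  have := hmono ⟨le_refl _, hx⟩ ⟨hx, le_refl _⟩ hx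
  simp only at this
  nlinarith

lemma escape_up (f d : ℝ → ℝ) (s m : ℝ)
    (hf : ∀ x, s ≤ x → HasDerivAt f (d x) x)
    (hm : ∀ x, s ≤ x → d x ≤ m) :
    ∀ x, s ≤ x → f x ≤ f s + m * (x - s) := by
  intro x hx
  have := escape_low (fun y => -f y) (fun y => -d y) s (-m)
    (fun y hy => (hf y hy).neg) (fun y hy => by linarith [hm y hy]) x hx
  nlinarith

lemma min_pos_on (φ : ℝ → ℝ) (a b : ℝ) (hab : a ≤ b)
    (hc : ContinuousOn φ (Set.Icc a b))
    (hpos : ∀ u ∈ Set.Icc a b, 0 < φ u) :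
    ∃ m, 0 < m ∧ ∀ u ∈ Set.Icc a b, m ≤ φ u := by
  obtain ⟨u0, hu0, hmin⟩ := isCompact_Icc.exists_isMinOn (Set.nonempty_Icc.mpr hab) hc
  exact ⟨φ u0, hpos u0 hu0, fun u hu => hmin hu⟩

set_option maxHeartbeats 2000000 in
/-- Right boundary layer: for ρ' = -(1-ρ)(F(ρ)-C)/(HC), solutions starting in
(0,ρ₂) converge to ρ₁ and solutions starting in (ρ₂,1) converge to 1. -/
theorem stmt13 (ρs C H ρ1 ρ2 : ℝ) (F : ℝ → ℝ)
    (hρs0 : 0 < ρs) (hρs1 : ρs < 1)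
    (hcont : ContinuousOn F (Set.Icc 0 1))
    (hF0 : F 0 = 0) (hF1 : F 1 = 0)
    (hmono : StrictMonoOn F (Set.Icc 0 ρs))
    (hanti : StrictAntiOn F (Set.Icc ρs 1))
    (hC0 : 0 < C) (hCs : C < F ρs) (hH : 0 < H)
    (hρ1 : ρ1 ∈ Set.Ioo 0 ρs) (hρ2 : ρ2 ∈ Set.Ioo ρs 1)
    (hFρ1 : F ρ1 = C) (hFρ2 : F ρ2 = C)
    (ρ : ℝ → ℝ)
    (hode : ∀ x ≥ (0 : ℝ), HasDerivAt ρ (-((1 - ρ x) * (F (ρ x) - C) / (H * C))) x) :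
    (ρ 0 ∈ Set.Ioo 0 ρ2 → Filter.Tendsto ρ Filter.atTop (nhds ρ1)) ∧
    (ρ 0 ∈ Set.Ioo ρ2 1 → Filter.Tendsto ρ Filter.atTop (nhds 1)) := by
  obtain ⟨hρ10, hρ1s⟩ := hρ1
  obtain ⟨hρ2s, hρ21⟩ := hρ2
  have hρ12 : ρ1 < ρ2 := lt_trans hρ1s hρ2s
  have hHC : 0 < H * C := mul_pos hH hC0
  have hFlt1 : ∀ u, 0 ≤ u → u < ρ1 → F u < C := by
    intro u h1 h2
    rw [← hFρ1]
    exact hmono ⟨h1, by linarith⟩ ⟨hρ10.le, hρ1s.le⟩ h2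
  have hFge : ∀ u, ρ1 ≤ u → u ≤ ρ2 → C ≤ F u := by
    intro u h1 h2
    rcases le_total u ρs with h | h
    · rw [← hFρ1]
      exact hmono.monotoneOn ⟨hρ10.le, hρ1s.le⟩ ⟨by linarith, h⟩ h1
    · rw [← hFρ2]
      exact hanti.antitoneOn ⟨h, by linarith⟩ ⟨hρ2s.le, hρ21.le⟩ h2
  have hFgt : ∀ u, ρ1 < u → u < ρ2 → C < F u := by
    intro u h1 h2
    rcases le_total u ρs with h | h
    · rw [← hFρ1]
      exact hmono ⟨hρ10.le, hρ1s.le⟩ ⟨by linarith, h⟩ h1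
    · rw [← hFρ2]
      exact hanti ⟨h, by linarith⟩ ⟨hρ2s.le, hρ21.le⟩ h2
  have hFle2 : ∀ u, ρ2 ≤ u → u ≤ 1 → F u ≤ C := by
    intro u h1 h2
    rw [← hFρ2]
    exact hanti.antitoneOn ⟨hρ2s.le, hρ21.le⟩ ⟨by linarith, h2⟩ h1
  have hF01 : ∀ u, ρ2 ≤ u → u ≤ 1 → 0 ≤ F u := by
    intro u h1 h2
    rw [← hF1]
    exact hanti.antitoneOn ⟨by linarith, h2⟩ ⟨hρs1.le, le_refl _⟩ h2
  have hGpos : ∀ u, 0 ≤ u → u < ρ1 → 0 < -((1 - u) * (F u - C) / (H * C)) := by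
    intro u h1 h2
    have hF := hFlt1 u h1 h2
    have h3 : (1 - u) * (F u - C) < 0 :=
      mul_neg_of_pos_of_neg (by linarith) (by linarith)
    have := div_neg_of_neg_of_pos h3 hHC
    linarith
  have hGle : ∀ u, ρ1 ≤ u → u ≤ ρ2 → -((1 - u) * (F u - C) / (H * C)) ≤ 0 := by
    intro u h1 h2
    have hF := hFge u h1 h2
    have h3 : 0 ≤ (1 - u) * (F u - C) := mul_nonneg (by linarith) (by linarith)
    have := div_nonneg h3 hHC.le
    linarith
  have hGlt : ∀ u, ρ1 < u → u < ρ2 → 0 < (1 - u) * (F u - C) / (H * C) := by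
    intro u h1 h2
    have hF := hFgt u h1 h2
    have h3 : 0 < (1 - u) * (F u - C) := mul_pos (by linarith) (by linarith)
    exact div_pos h3 hHC
  have hGge2 : ∀ u, ρ2 ≤ u → u ≤ 1 → 0 ≤ -((1 - u) * (F u - C) / (H * C)) := by
    intro u h1 h2
    have hF := hFle2 u h1 h2
    have h3 : (1 - u) * (F u - C) ≤ 0 := mul_nonpos_of_nonneg_of_nonpos (by linarith) (by linarith)
    have := div_nonpos_of_nonpos_of_nonneg h3 hHC.le
    linarith
  have hFlt2 : ∀ u, ρ2 < u → u ≤ 1 → F u < C := by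
    intro u h1 h2
    rw [← hFρ2]
    exact hanti ⟨hρ2s.le, hρ21.le⟩ ⟨by linarith, h2⟩ h1
  have hGgt2 : ∀ u, ρ2 < u → u < 1 → 0 < -((1 - u) * (F u - C) / (H * C)) := by
    intro u h1 h2
    have hF := hFlt2 u h1 (by linarith)
    have h3 : (1 - u) * (F u - C) < 0 :=
      mul_neg_of_pos_of_neg (by linarith) (by linarith)
    have := div_neg_of_neg_of_pos h3 hHC
    linarith
  have hGgron : ∀ u, ρ2 ≤ u → u ≤ 1 →
      -((1 - u) * (F u - C) / (H * C)) ≤ (1 - u) / H := by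
    intro u h1 h2
    have hF := hF01 u h1 h2
    have key : (1 - u) / H + (1 - u) * (F u - C) / (H * C) = (1 - u) * F u / (H * C) := by
      field_simp
      ring
    have h4 : 0 ≤ (1 - u) * F u / (H * C) :=
      div_nonneg (mul_nonneg (by linarith) hF) hHC.le
    linarith
  have hφcont : ContinuousOn (fun u => (1 - u) * (F u - C) / (H * C)) (Set.Icc 0 1) :=
    ((continuousOn_const.sub continuousOn_id).mul (hcont.sub continuousOn_const)).div_const _
  have hode' : ∀ x, (0:ℝ) ≤ x →
      HasDerivAt ρ (-((1 - ρ x) * (F (ρ x) - C) / (H * C))) x := fun x hx => hode x hx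
  constructor
  · rintro ⟨h0a, h0b⟩
    have inv_pos : ∀ x, (0:ℝ) ≤ x → 0 < ρ x :=
      barrier_low ρ (fun y => -((1 - ρ y) * (F (ρ y) - C) / (H * C))) 0 0 ρ1 hρ10 hode'
        (fun x _ h1 h2 => (hGpos (ρ x) h1 (by linarith)).le) h0a
    have inv_lt2 : ∀ x, (0:ℝ) ≤ x → ρ x < ρ2 :=
      barrier_up ρ (fun y => -((1 - ρ y) * (F (ρ y) - C) / (H * C))) 0 ρ2 (ρ2 - ρ1)
        (by linarith) hode'
        (fun x _ h1 h2 => hGle (ρ x) (by linarith) h2) h0b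
    have key : ∀ ε, 0 < ε → ε < ρ1 → ε < ρ2 - ρ1 →
        ∃ N, 0 ≤ N ∧ ∀ x, N ≤ x → |ρ x - ρ1| < ε := by
      intro ε hε hε1 hε2
      have stepA : ∃ x0, 0 ≤ x0 ∧ ρ x0 < ρ1 + ε := by
        by_cases hA : ρ 0 < ρ1 + ε
        · exact ⟨0, le_refl _, hA⟩
        push_neg at hA
        by_contra hc; push_neg at hc
        have hρ00 : ρ 0 < ρ2 := h0b
        have hb1 : ρ 0 < (ρ 0 + ρ2) / 2 := by linarith
        have hb2 : (ρ 0 + ρ2) / 2 < ρ2 := by linarith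
        have hb3 : ρ1 + ε ≤ (ρ 0 + ρ2) / 2 := by linarith
        have invb : ∀ x, (0:ℝ) ≤ x → ρ x < (ρ 0 + ρ2) / 2 :=
          barrier_up ρ (fun y => -((1 - ρ y) * (F (ρ y) - C) / (H * C))) 0 ((ρ 0 + ρ2) / 2)
            ((ρ 0 + ρ2) / 2 - ρ1) (by linarith) hode'
            (fun x _ hx1 hx2 => hGle (ρ x) (by linarith) (by linarith)) hb1
        obtain ⟨m, hm, hmle⟩ := min_pos_on (fun u => (1 - u) * (F u - C) / (H * C))
          (ρ1 + ε) ((ρ 0 + ρ2) / 2) (by linarith)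
          (hφcont.mono (Set.Icc_subset_Icc (by linarith) (by linarith)))
          (fun u hu => hGlt u (by linarith [hu.1]) (by linarith [hu.2]))
        have hub := escape_up ρ (fun y => -((1 - ρ y) * (F (ρ y) - C) / (H * C))) 0 (-m) hode'
          (fun x hx => by
            have h1 := hc x hx
            have h2 := (invb x hx).le
            have h3 := hmle (ρ x) ⟨h1, h2⟩
            linarith)
        have hXpos : (0:ℝ) < (ρ 0 - ρ1) / m := div_pos (by linarith) hm
        have h1 := hub ((ρ 0 - ρ1) / m + 1) (by linarith)
        have h2 := hc ((ρ 0 - ρ1) / m + 1) (by linarith)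
        have h3 : m * ((ρ 0 - ρ1) / m + 1 - 0) = ρ 0 - ρ1 + m := by
          field_simp
          ring
        nlinarith
      obtain ⟨x0, hx00, hx0⟩ := stepA
      have trap_up : ∀ x, x0 ≤ x → ρ x < ρ1 + ε :=
        barrier_up ρ (fun y => -((1 - ρ y) * (F (ρ y) - C) / (H * C))) x0 (ρ1 + ε) ε hε
          (fun x hx => hode' x (le_trans hx00 hx))
          (fun x _ h1 h2 => hGle (ρ x) (by linarith) (by linarith)) hx0
      have stepB : ∃ x1, x0 ≤ x1 ∧ ρ1 - ε < ρ x1 := by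
        by_contra hc; push_neg at hc
        have hρx0pos : 0 < ρ x0 := inv_pos x0 hx00
        have hcl : ρ x0 / 2 < ρ1 - ε := by
          have := hc x0 (le_refl _); linarith
        have invcl : ∀ x, x0 ≤ x → ρ x0 / 2 < ρ x :=
          barrier_low ρ (fun y => -((1 - ρ y) * (F (ρ y) - C) / (H * C))) x0 (ρ x0 / 2)
            (ρ1 - ρ x0 / 2) (by linarith)
            (fun x hx => hode' x (le_trans hx00 hx))
            (fun x _ hx1 hx2 => (hGpos (ρ x) (by linarith) (by linarith)).le)
            (by linarith)
        obtain ⟨m, hm, hmle⟩ := min_pos_on (fun u => -((1 - u) * (F u - C) / (H * C)))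
          (ρ x0 / 2) (ρ1 - ε) (by linarith)
          ((hφcont.mono (Set.Icc_subset_Icc (by linarith) (by linarith))).neg)
          (fun u hu => hGpos u (by linarith [hu.1]) (by linarith [hu.2]))
        have hlb := escape_low ρ (fun y => -((1 - ρ y) * (F (ρ y) - C) / (H * C))) x0 m
          (fun x hx => hode' x (le_trans hx00 hx))
          (fun x hx => hmle (ρ x) ⟨(invcl x hx).le, hc x hx⟩)
        have hXpos : 0 < ρ1 / m := div_pos hρ10 hm
        have h1 := hlb (x0 + ρ1 / m + 1) (by linarith)
        have h2 := hc (x0 + ρ1 / m + 1) (by linarith)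
        have h3 : m * (x0 + ρ1 / m + 1 - x0) = ρ1 + m := by
          field_simp
          ring
        nlinarith
      obtain ⟨x1, hx01, hx1⟩ := stepB
      have trap_dn : ∀ x, x1 ≤ x → ρ1 - ε < ρ x :=
        barrier_low ρ (fun y => -((1 - ρ y) * (F (ρ y) - C) / (H * C))) x1 (ρ1 - ε) ε hε
          (fun x hx => hode' x (le_trans (le_trans hx00 hx01) hx))
          (fun x _ h1 h2 => (hGpos (ρ x) (by linarith) (by linarith)).le) hx1
      refine ⟨x1, le_trans hx00 hx01, fun x hx => ?_⟩
      rw [abs_lt]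
      constructor
      · linarith [trap_dn x hx]
      · linarith [trap_up x (le_trans hx01 hx)]
    rw [Metric.tendsto_atTop]
    intro ε0 hε0
    have hε : 0 < min (ε0 / 2) (min (ρ1 / 2) ((ρ2 - ρ1) / 2)) :=
      lt_min (by linarith) (lt_min (by linarith) (by linarith))
    have hεa : min (ε0 / 2) (min (ρ1 / 2) ((ρ2 - ρ1) / 2)) ≤ ε0 / 2 := min_le_left _ _
    have hεb : min (ε0 / 2) (min (ρ1 / 2) ((ρ2 - ρ1) / 2)) ≤ ρ1 / 2 :=
      le_trans (min_le_right _ _) (min_le_left _ _)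
    have hεc : min (ε0 / 2) (min (ρ1 / 2) ((ρ2 - ρ1) / 2)) ≤ (ρ2 - ρ1) / 2 :=
      le_trans (min_le_right _ _) (min_le_right _ _)
    obtain ⟨N, hN0, hN⟩ := key _ hε (by linarith) (by linarith)
    refine ⟨N, fun x hx => ?_⟩
    rw [Real.dist_eq]
    have := hN x hx
    linarith
  · rintro ⟨h0a, h0b⟩
    have inv_gt2 : ∀ x, (0:ℝ) ≤ x → ρ2 < ρ x :=
      barrier_low ρ (fun y => -((1 - ρ y) * (F (ρ y) - C) / (H * C))) 0 ρ2 (1 - ρ2)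
        (by linarith) hode'
        (fun x _ h1 h2 => hGge2 (ρ x) h1 (by linarith)) h0a
    have hexp : ∀ x : ℝ, HasDerivAt (fun y => Real.exp (y / H)) (Real.exp (x / H) / H) x := by
      intro x
      have h1 : HasDerivAt (fun y : ℝ => y / H) (1 / H) x := (hasDerivAt_id x).div_const H
      have := (Real.hasDerivAt_exp (x / H)).comp x h1
      rw [mul_one_div] at this
      exact this
    have hbar : ∀ x, (0:ℝ) ≤ x → 0 < (1 - ρ x) * Real.exp (x / H) := by
      refine barrier_low (fun y => (1 - ρ y) * Real.exp (y / H))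
        (fun y => (0 - -((1 - ρ y) * (F (ρ y) - C) / (H * C))) * Real.exp (y / H)
          + (1 - ρ y) * (Real.exp (y / H) / H)) 0 0 1 one_pos
        (fun x hx => ((hasDerivAt_const x (1:ℝ)).sub (hode' x hx)).mul (hexp x))
        ?_ ?_
      · intro x hx h1 h2
        have he : 0 < Real.exp (x / H) := Real.exp_pos _
        have hρle1 : ρ x ≤ 1 := by nlinarith
        have hg := hGgron (ρ x) (inv_gt2 x hx).le hρle1
        have heq : (0 - -((1 - ρ x) * (F (ρ x) - C) / (H * C))) * Real.exp (x / H)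
            + (1 - ρ x) * (Real.exp (x / H) / H)
            = Real.exp (x / H) * ((1 - ρ x) / H - -((1 - ρ x) * (F (ρ x) - C) / (H * C))) := by
          field_simp
          ring
        rw [heq]
        exact mul_nonneg he.le (by linarith)
      · have : Real.exp (0 / H) = 1 := by
          norm_num
        rw [this]
        nlinarith
    have inv_lt1 : ∀ x, (0:ℝ) ≤ x → ρ x < 1 := by
      intro x hx
      have h1 := hbar x hx
      have he : 0 < Real.exp (x / H) := Real.exp_pos _
      nlinarith
    have key2 : ∀ ε, 0 < ε → ε < 1 - ρ2 →
        ∃ N, 0 ≤ N ∧ ∀ x, N ≤ x → |ρ x - 1| < ε := by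
      intro ε hε hε2
      have stepA : ∃ x0, 0 ≤ x0 ∧ 1 - ε < ρ x0 := by
        by_contra hc; push_neg at hc
        have hc0 := hc 0 (le_refl _)
        have hcl1 : ρ2 < (ρ 0 + ρ2) / 2 := by linarith
        have hcl2 : (ρ 0 + ρ2) / 2 < ρ 0 := by linarith
        have invcl : ∀ x, (0:ℝ) ≤ x → (ρ 0 + ρ2) / 2 < ρ x :=
          barrier_low ρ (fun y => -((1 - ρ y) * (F (ρ y) - C) / (H * C))) 0 ((ρ 0 + ρ2) / 2)
            (1 - (ρ 0 + ρ2) / 2) (by linarith) hode'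
            (fun x _ h1 h2 => hGge2 (ρ x) (by linarith) (by linarith)) hcl2
        obtain ⟨m, hm, hmle⟩ := min_pos_on (fun u => -((1 - u) * (F u - C) / (H * C)))
          ((ρ 0 + ρ2) / 2) (1 - ε) (by linarith)
          ((hφcont.mono (Set.Icc_subset_Icc (by linarith) (by linarith))).neg)
          (fun u hu => hGgt2 u (by linarith [hu.1]) (by linarith [hu.2]))
        have hlb := escape_low ρ (fun y => -((1 - ρ y) * (F (ρ y) - C) / (H * C))) 0 m hode'
          (fun x hx => hmle (ρ x) ⟨(invcl x hx).le, hc x hx⟩)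
        have hXpos : (0:ℝ) < 1 / m := by positivity
        have h1 := hlb (1 / m) hXpos.le
        have h2 := hc (1 / m) hXpos.le
        have h3 : m * (1 / m - 0) = 1 := by field_simp; ring
        nlinarith
      obtain ⟨x0, hx00, hx0⟩ := stepA
      have trap : ∀ x, x0 ≤ x → 1 - ε < ρ x :=
        barrier_low ρ (fun y => -((1 - ρ y) * (F (ρ y) - C) / (H * C))) x0 (1 - ε) ε hε
          (fun x hx => hode' x (le_trans hx00 hx))
          (fun x _ h1 h2 => (hGgt2 (ρ x) (by linarith) (by linarith)).le) hx0
      refine ⟨x0, hx00, fun x hx => ?_⟩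
      rw [abs_lt]
      constructor
      · linarith [trap x hx]
      · linarith [inv_lt1 x (le_trans hx00 hx)]
    rw [Metric.tendsto_atTop]
    intro ε0 hε0
    have hε : 0 < min (ε0 / 2) ((1 - ρ2) / 2) := lt_min (by linarith) (by linarith)
    have hεa : min (ε0 / 2) ((1 - ρ2) / 2) ≤ ε0 / 2 := min_le_left _ _
    have hεb : min (ε0 / 2) ((1 - ρ2) / 2) ≤ (1 - ρ2) / 2 := min_le_right _ _
    obtain ⟨N, hN0, hN⟩ := key2 _ hε (by linarith)
    refine ⟨N, fun x hx => ?_⟩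
    rw [Real.dist_eq]
    have := hN x hx
    linarith
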